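/- Let a, b, c > 0 and let f : ℝ³ → ℝ, f(x, y, z) = x²/a² + y²/b² + z²/c² − 1. At each of the two characteristic points p = (0, 0, c) and p = (0, 0, −c) of the ellipsoid f⁻¹(0), the metric coefficient satisfies K̂_p = −1 + [(X₁X₁f)(p)·(X₂X₂f)(p) − (X₁X₂f)(p)·(X₂X₁f)(p)] / [X₂(X₁f)(p) − X₁(X₂f)(p)]² = −3/4 + c²/(a²·b²). -/

import Mathlib

/-- Derivative along the Heisenberg frame field `X₁ = ∂_x − (y/2)∂_z`. -/
noncomputable def X1d (g : ℝ × ℝ × ℝ → ℝ) (x : ℝ × ℝ × ℝ) : ℝ :=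
  fderiv ℝ g x (1, 0, -x.2.1 / 2)

/-- Derivative along the Heisenberg frame field `X₂ = ∂_y + (x/2)∂_z`. -/
noncomputable def X2d (g : ℝ × ℝ × ℝ → ℝ) (x : ℝ × ℝ × ℝ) : ℝ :=
  fderiv ℝ g x (0, 1, x.1 / 2)

open ContinuousLinearMap in
private noncomputable def Cx : (ℝ × ℝ × ℝ) →L[ℝ] ℝ := fst ℝ ℝ (ℝ × ℝ)
open ContinuousLinearMap in
private noncomputable def Cy : (ℝ × ℝ × ℝ) →L[ℝ] ℝ := (fst ℝ ℝ ℝ).comp (snd ℝ ℝ (ℝ × ℝ))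
open ContinuousLinearMap in
private noncomputable def Cz : (ℝ × ℝ × ℝ) →L[ℝ] ℝ := (snd ℝ ℝ ℝ).comp (snd ℝ ℝ (ℝ × ℝ))

private lemma hx (q : ℝ × ℝ × ℝ) : HasFDerivAt (fun q : ℝ × ℝ × ℝ => q.1) Cx q :=
  hasFDerivAt_fst
private lemma hy (q : ℝ × ℝ × ℝ) : HasFDerivAt (fun q : ℝ × ℝ × ℝ => q.2.1) Cy q :=
  hasFDerivAt_fst.comp q hasFDerivAt_snd
private lemma hz (q : ℝ × ℝ × ℝ) : HasFDerivAt (fun q : ℝ × ℝ × ℝ => q.2.2) Cz q :=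
  hasFDerivAt_snd.comp q hasFDerivAt_snd

private lemma quad_fderiv (a b c : ℝ) (q v : ℝ × ℝ × ℝ) :
    fderiv ℝ (fun q : ℝ×ℝ×ℝ => q.1^2/a^2 + q.2.1^2/b^2 + q.2.2^2/c^2 - 1) q v
      = 2*q.1*v.1/a^2 + 2*q.2.1*v.2.1/b^2 + 2*q.2.2*v.2.2/c^2 := by
  have he : (fun q : ℝ×ℝ×ℝ => q.1^2/a^2 + q.2.1^2/b^2 + q.2.2^2/c^2 - 1)
      = fun q : ℝ×ℝ×ℝ => q.1*q.1*(a^2)⁻¹ + q.2.1*q.2.1*(b^2)⁻¹ + q.2.2*q.2.2*(c^2)⁻¹ - 1 := by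
    funext q; ring
  rw [he]
  have h := (((((hx q).mul (hx q)).mul_const ((a^2)⁻¹)).add
      (((hy q).mul (hy q)).mul_const ((b^2)⁻¹))).add
      (((hz q).mul (hz q)).mul_const ((c^2)⁻¹))).sub_const 1
  rw [HasFDerivAt.fderiv (f := fun q : ℝ×ℝ×ℝ => q.1*q.1*(a^2)⁻¹ + q.2.1*q.2.1*(b^2)⁻¹ + q.2.2*q.2.2*(c^2)⁻¹ - 1) h]
  simp [Cx, Cy, Cz]
  ring

private lemma g1_fderiv (a c : ℝ) (q v : ℝ × ℝ × ℝ) :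
    fderiv ℝ (fun q : ℝ×ℝ×ℝ => 2*q.1/a^2 - q.2.2*q.2.1/c^2) q v
      = 2*v.1/a^2 - (v.2.2*q.2.1 + q.2.2*v.2.1)/c^2 := by
  have he : (fun q : ℝ×ℝ×ℝ => 2*q.1/a^2 - q.2.2*q.2.1/c^2)
      = fun q : ℝ×ℝ×ℝ => 2*q.1*(a^2)⁻¹ - q.2.2*q.2.1*(c^2)⁻¹ := by funext q; ring
  rw [he]
  have h := ((((hx q).const_mul 2).mul_const ((a^2)⁻¹)).sub
      (((hz q).mul (hy q)).mul_const ((c^2)⁻¹)))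
  rw [HasFDerivAt.fderiv (f := fun q : ℝ×ℝ×ℝ => 2*q.1*(a^2)⁻¹ - q.2.2*q.2.1*(c^2)⁻¹) h]
  simp [Cx, Cy, Cz]
  ring

private lemma g2_fderiv (b c : ℝ) (q v : ℝ × ℝ × ℝ) :
    fderiv ℝ (fun q : ℝ×ℝ×ℝ => 2*q.2.1/b^2 + q.2.2*q.1/c^2) q v
      = 2*v.2.1/b^2 + (v.2.2*q.1 + q.2.2*v.1)/c^2 := by
  have he : (fun q : ℝ×ℝ×ℝ => 2*q.2.1/b^2 + q.2.2*q.1/c^2)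
      = fun q : ℝ×ℝ×ℝ => 2*q.2.1*(b^2)⁻¹ + q.2.2*q.1*(c^2)⁻¹ := by funext q; ring
  rw [he]
  have h := ((((hy q).const_mul 2).mul_const ((b^2)⁻¹)).add
      (((hz q).mul (hx q)).mul_const ((c^2)⁻¹)))
  rw [HasFDerivAt.fderiv (f := fun q : ℝ×ℝ×ℝ => 2*q.2.1*(b^2)⁻¹ + q.2.2*q.1*(c^2)⁻¹) h]
  simp [Cx, Cy, Cz]
  ring

/-- At each of the two characteristic points `(0, 0, ±c)` of the ellipsoid
`{x²/a² + y²/b² + z²/c² = 1}` in the Heisenberg group, the metric coefficient is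
`K̂ = −1 + det Hess_H f / ([X₂,X₁]f)² = −3/4 + c²/(a²b²)`. -/
theorem ellipsoid_Khat
    (a b c : ℝ) (ha : 0 < a) (hb : 0 < b) (hc : 0 < c)
    (f : ℝ × ℝ × ℝ → ℝ)
    (hf : f = fun q => q.1 ^ 2 / a ^ 2 + q.2.1 ^ 2 / b ^ 2 + q.2.2 ^ 2 / c ^ 2 - 1)
    (p : ℝ × ℝ × ℝ)
    (hp : p = ((0 : ℝ), (0 : ℝ), c) ∨ p = ((0 : ℝ), (0 : ℝ), -c)) :
    -1 + (X1d (X1d f) p * X2d (X2d f) p - X1d (X2d f) p * X2d (X1d f) p)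
        / (X2d (X1d f) p - X1d (X2d f) p) ^ 2
      = -(3 / 4) + c ^ 2 / (a ^ 2 * b ^ 2) := by
  have ha' := ha.ne'
  have hb' := hb.ne'
  have hc' := hc.ne'
  have hX1f : X1d f = fun q : ℝ×ℝ×ℝ => 2*q.1/a^2 - q.2.2*q.2.1/c^2 := by
    funext q
    rw [X1d, hf, quad_fderiv]
    ring
  have hX2f : X2d f = fun q : ℝ×ℝ×ℝ => 2*q.2.1/b^2 + q.2.2*q.1/c^2 := by
    funext q
    rw [X2d, hf, quad_fderiv]
    ring
  have h11 : X1d (X1d f) p = 2*1/a^2 - (((-p.2.1/2))*p.2.1 + p.2.2*0)/c^2 := by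
    rw [hX1f, X1d, g1_fderiv]
  have h21 : X2d (X1d f) p = 2*0/a^2 - ((p.1/2)*p.2.1 + p.2.2*1)/c^2 := by
    rw [hX1f, X2d, g1_fderiv]
  have h12 : X1d (X2d f) p = 2*0/b^2 + ((-p.2.1/2)*p.1 + p.2.2*1)/c^2 := by
    rw [hX2f, X1d, g2_fderiv]
  have h22 : X2d (X2d f) p = 2*1/b^2 + ((p.1/2)*p.1 + p.2.2*0)/c^2 := by
    rw [hX2f, X2d, g2_fderiv]
  have hcc : ∀ s : ℝ, s = c ∨ s = -c → (s*1)/c^2 = s/c^2 := by intros; ring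
  rcases hp with hp | hp <;>
    subst hp <;>
    simp only at h11 h21 h12 h22 <;>
    rw [h11, h21, h12, h22] <;>
    have hcd : (c:ℝ)/c^2 = 1/c := by field_simp
  · rw [show (2*1/a^2 - (-0/2*0 + c*0)/c^2 : ℝ) = 2/a^2 by ring,
       show (2*0/a^2 - (0/2*0 + c*1)/c^2 : ℝ) = -(1/c) by rw [← hcd]; ring,
       show (2*0/b^2 + (-0/2*0 + c*1)/c^2 : ℝ) = 1/c by rw [← hcd]; ring,
       show (2*1/b^2 + (0/2*0 + c*0)/c^2 : ℝ) = 2/b^2 by ring]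
    rw [show (-(1/c) - 1/c : ℝ) = -(2/c) by ring, neg_pow]
    field_simp
    ring
  · rw [show (2*1/a^2 - (-0/2*0 + -c*0)/c^2 : ℝ) = 2/a^2 by ring,
       show (2*0/a^2 - (0/2*0 + -c*1)/c^2 : ℝ) = 1/c by rw [← hcd]; ring,
       show (2*0/b^2 + (-0/2*0 + -c*1)/c^2 : ℝ) = -(1/c) by rw [← hcd]; ring,
       show (2*1/b^2 + (0/2*0 + -c*0)/c^2 : ℝ) = 2/b^2 by ring]
    rw [show (1/c - -(1/c) : ℝ) = 2/c by ring]
    field_simp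
    ring
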